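/- Let n ≥ 2 and let r, q, t, s be integers with n ≥ t > s ≥ 1 and n ≥ r > q ≥ 1. If (t − r)(t − q)(s − r)(s − q) > 0, then in the braid group B_n the band generators commute: a_{t,s} · a_{r,q} = a_{r,q} · a_{t,s}. -/
import Mathlib


/-- Relations for the Artin presentation of the braid group `B n`.
Generators are indexed by `Fin (n-1)`, with index `i` representing `σ_{i+1}`. -/
def braidRels (n : ℕ) : Set (FreeGroup (Fin (n - 1))) :=
  { r | (∃ i j : Fin (n - 1), (i : ℕ) + 2 ≤ (j : ℕ) ∧
          r = FreeGroup.of i * FreeGroup.of j * (FreeGroup.of i)⁻¹ * (FreeGroup.of j)⁻¹) ∨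
        (∃ i j : Fin (n - 1), (j : ℕ) = (i : ℕ) + 1 ∧
          r = FreeGroup.of i * FreeGroup.of j * FreeGroup.of i *
              (FreeGroup.of j * FreeGroup.of i * FreeGroup.of j)⁻¹) }

/-- The braid group `B n` on `n` strands, as a presented group. -/
abbrev BraidGroup (n : ℕ) : Type := PresentedGroup (braidRels n)

/-- The Artin generator `σ_i` of `B n`, for `1 ≤ i ≤ n - 1` (junk value `1` otherwise). -/
def braidGen (n i : ℕ) : BraidGroup n :=
  if h : i - 1 < n - 1 then PresentedGroup.of ⟨i - 1, h⟩ else 1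

/-- The conjugating word `σ_{t-1} σ_{t-2} ⋯ σ_{s+1}` used to define band generators. -/
def bandConj (n t s : ℕ) : BraidGroup n :=
  ((List.range (t - 1 - s)).map (fun k => braidGen n (t - 1 - k))).prod

/-- The band generator `a_{t,s} = (σ_{t-1} ⋯ σ_{s+1}) σ_s (σ_{t-1} ⋯ σ_{s+1})⁻¹` of `B n`. -/
def band (n t s : ℕ) : BraidGroup n :=
  bandConj n t s * braidGen n s * (bandConj n t s)⁻¹

lemma rel_eq_one {n : ℕ} {r : FreeGroup (Fin (n-1))} (h : r ∈ braidRels n) :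
    PresentedGroup.mk (braidRels n) r = 1 :=
  (QuotientGroup.eq_one_iff _).mpr (Subgroup.subset_normalClosure h)

lemma sigma_comm {n i j : ℕ} (hi : 1 ≤ i) (hij : i + 2 ≤ j) (hj : j ≤ n - 1) :
    Commute (braidGen n i) (braidGen n j) := by
  have hi' : i - 1 < n - 1 := by omega
  have hj' : j - 1 < n - 1 := by omega
  have hmem : (FreeGroup.of (⟨i-1, hi'⟩ : Fin (n-1)) * FreeGroup.of ⟨j-1, hj'⟩ *
      (FreeGroup.of (⟨i-1, hi'⟩ : Fin (n-1)))⁻¹ * (FreeGroup.of (⟨j-1, hj'⟩ : Fin (n-1)))⁻¹)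
      ∈ braidRels n := Or.inl ⟨⟨i-1, hi'⟩, ⟨j-1, hj'⟩, by simp; omega, rfl⟩
  have h1 := rel_eq_one hmem
  simp only [map_mul, map_inv] at h1
  have : PresentedGroup.mk (braidRels n) (FreeGroup.of ⟨i-1,hi'⟩) = braidGen n i := by
    rw [braidGen, dif_pos hi']; rfl
  rw [this] at h1
  have : PresentedGroup.mk (braidRels n) (FreeGroup.of ⟨j-1,hj'⟩) = braidGen n j := by
    rw [braidGen, dif_pos hj']; rfl
  rw [this] at h1
  rw [commute_iff_eq]
  rw [mul_inv_eq_one, mul_inv_eq_iff_eq_mul] at h1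
  exact h1

lemma sigma_braid {n i : ℕ} (hi : 1 ≤ i) (hin : i + 1 ≤ n - 1) :
    braidGen n i * braidGen n (i+1) * braidGen n i
      = braidGen n (i+1) * braidGen n i * braidGen n (i+1) := by
  have hi' : i - 1 < n - 1 := by omega
  have hj' : i + 1 - 1 < n - 1 := by omega
  have hmem : (FreeGroup.of (⟨i-1, hi'⟩ : Fin (n-1)) * FreeGroup.of ⟨i+1-1, hj'⟩ *
      FreeGroup.of ⟨i-1, hi'⟩ *
      (FreeGroup.of (⟨i+1-1, hj'⟩ : Fin (n-1)) * FreeGroup.of ⟨i-1, hi'⟩ *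
        FreeGroup.of (⟨i+1-1, hj'⟩ : Fin (n-1)))⁻¹) ∈ braidRels n :=
    Or.inr ⟨⟨i-1, hi'⟩, ⟨i+1-1, hj'⟩, by simp; omega, rfl⟩
  have h1 := rel_eq_one hmem
  simp only [map_mul, map_inv] at h1
  have e1 : PresentedGroup.mk (braidRels n) (FreeGroup.of ⟨i-1,hi'⟩) = braidGen n i := by
    rw [braidGen, dif_pos hi']; rfl
  have e2 : PresentedGroup.mk (braidRels n) (FreeGroup.of ⟨i+1-1,hj'⟩) = braidGen n (i+1) := by
    rw [braidGen, dif_pos hj']; rfl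
  rw [e1, e2, mul_inv_eq_one] at h1
  exact h1

lemma bandConj_eq_one {n t s : ℕ} (h : t ≤ s + 1) : bandConj n t s = 1 := by
  unfold bandConj
  have : t - 1 - s = 0 := by omega
  rw [this]; simp

lemma bandConj_cons {n t s : ℕ} (h : s + 1 < t) :
    bandConj n t s = braidGen n (t-1) * bandConj n (t-1) s := by
  unfold bandConj
  obtain ⟨m, hm⟩ : ∃ m, t - 1 - s = m + 1 := ⟨t - 2 - s, by omega⟩
  have hm' : t - 1 - 1 - s = m := by omega
  rw [hm, hm', List.range_succ_eq_map, List.map_cons, List.prod_cons, List.map_map]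
  congr 2
  refine List.map_congr_left fun k _ => ?_
  show braidGen n (t-1-(k+1)) = braidGen n (t-1-1-k)
  congr 1
  omega

lemma bandConj_split {n : ℕ} (t : ℕ) {m s : ℕ} (hsm : s ≤ m) (hmt : m < t) :
    bandConj n t s = bandConj n t m * bandConj n (m+1) s := by
  induction t using Nat.strong_induction_on with
  | _ t ih =>
    by_cases h : t ≤ m + 1
    · have : t = m + 1 := by omega
      subst this
      rw [bandConj_eq_one (le_refl (m+1)), one_mul]
    · rw [bandConj_cons (show s + 1 < t by omega), bandConj_cons (show m + 1 < t by omega),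
        ih (t-1) (by omega) (by omega), mul_assoc]

lemma commute_bandConj {n t s : ℕ} {g : BraidGroup n}
    (h : ∀ j, s + 1 ≤ j → j ≤ t - 1 → Commute g (braidGen n j)) :
    Commute g (bandConj n t s) := by
  unfold bandConj
  apply Commute.list_prod_right
  intro x hx
  simp only [List.mem_map, List.mem_range] at hx
  obtain ⟨k, hk, rfl⟩ := hx
  exact h _ (by omega) (by omega)

lemma commute_band {n t s : ℕ} {g : BraidGroup n} (hst : s < t)
    (h : ∀ j, s ≤ j → j ≤ t - 1 → Commute g (braidGen n j)) :
    Commute g (band n t s) := by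
  have hc : Commute g (bandConj n t s) := commute_bandConj (fun j h1 h2 => h j (by omega) h2)
  exact (hc.mul_right (h s le_rfl (by omega))).mul_right hc.inv_right

lemma sigma_mul_bandConj {n r q i : ℕ} (hq : 1 ≤ q) (h1 : q + 1 ≤ i) (h2 : i + 2 ≤ r)
    (hrn : r ≤ n) :
    braidGen n i * bandConj n r q = bandConj n r q * braidGen n (i+1) := by
  have hA : Commute (braidGen n i) (bandConj n r (i+1)) :=
    commute_bandConj (fun j hj1 hj2 => sigma_comm (by omega) (by omega) (by omega))
  have hB : Commute (braidGen n (i+1)) (bandConj n i q) :=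
    commute_bandConj (fun j hj1 hj2 => (sigma_comm (by omega) (by omega) (by omega)).symm)
  have hbr := sigma_braid (n := n) (i := i) (by omega) (by omega)
  have hsplit : bandConj n r q
      = bandConj n r (i+1) * (braidGen n (i+1) * (braidGen n i * bandConj n i q)) := by
    rw [bandConj_split r (show q ≤ i + 1 by omega) (show i + 1 < r by omega),
        bandConj_cons (show q + 1 < i + 1 + 1 by omega)]
    simp only [Nat.add_sub_cancel]
    rw [bandConj_cons (show q + 1 < i + 1 by omega)]
    simp only [Nat.add_sub_cancel]
  set A := bandConj n r (i+1)
  set B := bandConj n i q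
  set x := braidGen n i
  set y := braidGen n (i+1)
  rw [hsplit]
  calc x * (A * (y * (x * B)))
      = A * (x * y * x * B) := by rw [← mul_assoc, hA.eq]; group
    _ = A * (y * x * y * B) := by rw [hbr]
    _ = A * (y * (x * B)) * y := by
        rw [mul_assoc (y * x), hB.eq]; group

lemma inner_comm {n r q i : ℕ} (hq : 1 ≤ q) (h1 : q + 1 ≤ i) (h2 : i + 2 ≤ r) (hrn : r ≤ n) :
    Commute (braidGen n i) (band n r q) := by
  rw [commute_iff_eq]
  unfold band
  have hshift := sigma_mul_bandConj hq h1 h2 hrn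
  have hcq : Commute (braidGen n (i+1)) (braidGen n q) :=
    (sigma_comm hq (by omega) (by omega)).symm
  have hsemi : SemiconjBy (bandConj n r q) (braidGen n (i+1)) (braidGen n i) := hshift.symm
  have hinv : braidGen n (i+1) * (bandConj n r q)⁻¹ = (bandConj n r q)⁻¹ * braidGen n i :=
    (hsemi.inv_symm_left).eq.symm
  calc braidGen n i * (bandConj n r q * braidGen n q * (bandConj n r q)⁻¹)
      = braidGen n i * bandConj n r q * braidGen n q * (bandConj n r q)⁻¹ := by group
    _ = bandConj n r q * braidGen n (i+1) * braidGen n q * (bandConj n r q)⁻¹ := by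
        rw [hshift]
    _ = bandConj n r q * braidGen n q * (braidGen n (i+1) * (bandConj n r q)⁻¹) := by
        rw [mul_assoc _ (braidGen n (i+1)), hcq.eq]; group
    _ = bandConj n r q * braidGen n q * (bandConj n r q)⁻¹ * braidGen n i := by
        rw [hinv]; group

/-- If `n ≥ 2`, `n ≥ t > s ≥ 1`, `n ≥ r > q ≥ 1` and
`(t − r)(t − q)(s − r)(s − q) > 0`, then the band generators `a_{t,s}` and `a_{r,q}`
commute in the braid group `B n`. -/
theorem band_generators_commute (n t s r q : ℕ) (hn : 2 ≤ n)
    (htn : t ≤ n) (hst : s < t) (hs : 1 ≤ s)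
    (hrn : r ≤ n) (hqr : q < r) (hq : 1 ≤ q)
    (hpos : ((t : ℤ) - r) * ((t : ℤ) - q) * ((s : ℤ) - r) * ((s : ℤ) - q) > 0) :
    band n t s * band n r q = band n r q * band n t s := by
  have hcases : t < q ∨ r < s ∨ (q < s ∧ t < r) ∨ (s < q ∧ r < t) := by
    by_contra hcon
    push_neg at hcon
    obtain ⟨hqt, hsr, h3, h4⟩ := hcon
    rcases lt_trichotomy s q with hsq | rfl | hqs
    · have hR := h4 hsq
      have k3 : (0:ℤ) ≤ ((r:ℤ)-t) * ((t:ℤ)-q) * ((r:ℤ)-s) * ((q:ℤ)-s) :=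
        mul_nonneg (mul_nonneg (mul_nonneg (by omega) (by omega)) (by omega)) (by omega)
      have hid : ((t:ℤ)-r) * ((t:ℤ)-q) * ((s:ℤ)-r) * ((s:ℤ)-q)
          = -(((r:ℤ)-t) * ((t:ℤ)-q) * ((r:ℤ)-s) * ((q:ℤ)-s)) := by ring
      rw [hid] at hpos
      linarith
    · simp at hpos
    · have hR := h3 hqs
      have k3 : (0:ℤ) ≤ ((t:ℤ)-r) * ((t:ℤ)-q) * ((r:ℤ)-s) * ((s:ℤ)-q) :=
        mul_nonneg (mul_nonneg (mul_nonneg (by omega) (by omega)) (by omega)) (by omega)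
      have hid : ((t:ℤ)-r) * ((t:ℤ)-q) * ((s:ℤ)-r) * ((s:ℤ)-q)
          = -(((t:ℤ)-r) * ((t:ℤ)-q) * ((r:ℤ)-s) * ((s:ℤ)-q)) := by ring
      rw [hid] at hpos
      linarith
  rcases hcases with h | h | ⟨h1, h2⟩ | ⟨h1, h2⟩
  · exact (commute_band hqr (fun j hj1 hj2 =>
      (commute_band hst (fun k hk1 hk2 =>
        (sigma_comm (by omega) (by omega) (by omega) : Commute _ (braidGen n j)).symm)).symm)).eq
  · exact (commute_band hqr (fun j hj1 hj2 =>
      (commute_band hst (fun k hk1 hk2 =>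
        sigma_comm (by omega) (by omega) (by omega))).symm)).eq
  · exact ((commute_band hst (fun k hk1 hk2 =>
      (inner_comm hq (by omega) (by omega) hrn).symm)).symm).eq
  · exact (commute_band hqr (fun j hj1 hj2 =>
      (inner_comm hs (by omega) (by omega) htn).symm)).eq
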